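/- For all (possibly empty) binary strings σ and ρ, the threshold graphs G = T(σ 0110 ρ) and G' = T(σ 1001 ρ) have the same number of vertices and edges and satisfy m(G) = m(G') and m_k(G) = m_k(G') for every k ≥ 0. -/

import Mathlib

/-!
Common definitions: threshold graphs from binary codes, counts of matchings and
independent sets, lex and colex graphs, and almost alternating codes.

A binary code is a `List Bool` whose head is the *leftmost* (most significant,
last added) digit; `true` stands for the digit `1` and `false` for `0`.
Reading the code from right to left, each digit adds a vertex: a `1` adds a
dominating vertex and a `0` adds an isolated vertex.  Equivalently, the vertex
at position `i` (from the left) is adjacent to every vertex to its right iff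
its digit is `1`.  Note that the value of the rightmost digit (the star) never
affects the graph.
-/

/-- The threshold graph encoded by a binary code `σ`. -/
def threshOf (σ : List Bool) : SimpleGraph (Fin σ.length) where
  Adj i j := i ≠ j ∧ σ.get (min i j) = true
  symm := by
    constructor
    intro i j h
    refine ⟨h.1.symm, ?_⟩
    rw [min_comm]
    exact h.2
  loopless := by
    constructor
    intro i h
    exact h.1 rfl

/-- The number of edges of a graph. -/
noncomputable def edgeCount {V : Type*} (G : SimpleGraph V) : ℕ := Nat.card G.edgeSet

/-- `M` is a matching of `G`: a set of pairwise disjoint edges of `G`. -/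
def IsMatchingSet {V : Type*} (G : SimpleGraph V) (M : Finset (Sym2 V)) : Prop :=
  (∀ e ∈ M, e ∈ G.edgeSet) ∧ ∀ e ∈ M, ∀ f ∈ M, e ≠ f → ∀ v : V, v ∈ e → v ∉ f

/-- `m(G)`: the total number of matchings of `G` (including the empty matching). -/
noncomputable def matchCount {V : Type*} (G : SimpleGraph V) : ℕ :=
  Nat.card {M : Finset (Sym2 V) // IsMatchingSet G M}

/-- `m_k(G)`: the number of matchings of `G` of size `k`. -/
noncomputable def matchCountK {V : Type*} (G : SimpleGraph V) (k : ℕ) : ℕ :=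
  Nat.card {M : Finset (Sym2 V) // IsMatchingSet G M ∧ M.card = k}

/-- `i(G)`: the number of independent sets of `G` (including the empty set). -/
noncomputable def indCount {V : Type*} (G : SimpleGraph V) : ℕ :=
  Nat.card {S : Finset V // ∀ u ∈ S, ∀ v ∈ S, ¬ G.Adj u v}

/-- `i_k(G)`: the number of independent sets of `G` of size `k`. -/
noncomputable def indCountK {V : Type*} (G : SimpleGraph V) (k : ℕ) : ℕ :=
  Nat.card {S : Finset V // (∀ u ∈ S, ∀ v ∈ S, ¬ G.Adj u v) ∧ S.card = k}

/-- Two codes encode the same threshold graph: they have the same length and agree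
except possibly in the rightmost (starred) digit. -/
def CodeEquiv (σ τ : List Bool) : Prop := σ.length = τ.length ∧ σ.dropLast = τ.dropLast

/-- Words that are concatenations of copies of the letters `a = 01` and `b = 10`. -/
inductive IsABWord : List Bool → Prop
  | nil : IsABWord []
  | a {w : List Bool} : IsABWord w → IsABWord (false :: true :: w)
  | b {w : List Bool} : IsABWord w → IsABWord (true :: false :: w)

/-- `w` is a concatenation of `α` copies of the letter `a = 01` and `β` copies of the
letter `b = 10`, in some order. -/
def IsABWordWith (α β : ℕ) (w : List Bool) : Prop :=
  ∃ ls : List (List Bool), (∀ x ∈ ls, x = [false, true] ∨ x = [true, false]) ∧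
    ls.count [false, true] = α ∧ ls.count [true, false] = β ∧ w = ls.flatten

/-- A code is almost alternating if (possibly after reinterpreting the starred rightmost
digit) it is an initial constant block followed by a word in the letters `a = 01` and
`b = 10`, either using the rightmost digit as the final digit of the last letter
(unstarred case) or keeping the rightmost digit separate after the word (starred case). -/
def IsAlmostAltCode (σ : List Bool) : Prop :=
  ∃ τ : List Bool, CodeEquiv σ τ ∧
    ∃ (t : ℕ) (c : Bool) (w : List Bool), IsABWord w ∧
      (τ = List.replicate t c ++ w ∨ ∃ d : Bool, τ = List.replicate t c ++ w ++ [d])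

/-- A small almost alternating code: the initial block consists of `0`'s (or is empty). -/
def IsSmallAACode (σ : List Bool) : Prop :=
  ∃ τ : List Bool, CodeEquiv σ τ ∧
    ∃ (t : ℕ) (w : List Bool), IsABWord w ∧
      (τ = List.replicate t false ++ w ∨ ∃ d : Bool, τ = List.replicate t false ++ w ++ [d])

/-- A large almost alternating code: the initial block is a nonempty block of `1`'s. -/
def IsLargeAACode (σ : List Bool) : Prop :=
  ∃ τ : List Bool, CodeEquiv σ τ ∧
    ∃ (t : ℕ) (w : List Bool), 1 ≤ t ∧ IsABWord w ∧
      (τ = List.replicate t true ++ w ∨ ∃ d : Bool, τ = List.replicate t true ++ w ++ [d])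

/-- A code has a bracketed string if (possibly after reinterpreting the starred rightmost
digit) it contains a substring `1 0^j 1` or `0 1^j 0` with `j ≥ 3`. -/
def HasBracketedString (σ : List Bool) : Prop :=
  ∃ τ : List Bool, CodeEquiv σ τ ∧ ∃ (x y : List Bool) (j : ℕ), 3 ≤ j ∧
    (τ = x ++ [true] ++ List.replicate j false ++ [true] ++ y ∨
     τ = x ++ [false] ++ List.replicate j true ++ [false] ++ y)

/-- A code has a separation issue if it contains two pairs of repeated digits separated by
a substring of odd length, where the first pair is immediately preceded by the opposite
digit and the second pair is followed by at least one further digit. -/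
def HasSeparationIssue (σ : List Bool) : Prop :=
  ∃ (x m y : List Bool) (d c : Bool),
    Odd m.length ∧ y ≠ [] ∧ σ = x ++ [!d, d, d] ++ m ++ [c, c] ++ y

/-- The colex graph `C(n,e)`: the graph on `Fin n` whose edges are the first `e` pairs in
the colexicographic order.  The pair `{i, j}` with `i < j` has rank `j(j-1)/2 + i` in
this order. -/
def colexGraph (n e : ℕ) : SimpleGraph (Fin n) where
  Adj i j := i ≠ j ∧ max i.val j.val * (max i.val j.val - 1) / 2 + min i.val j.val < e
  symm := by
    constructor
    intro i j h
    refine ⟨h.1.symm, ?_⟩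
    rw [max_comm j.val i.val, min_comm j.val i.val]
    exact h.2
  loopless := by
    constructor
    intro i h
    exact h.1 rfl

/-- The lex graph `L(n,e)`: the graph on `Fin n` whose edges are the first `e` pairs in
the lexicographic order.  The pair `{i, j}` with `i < j` has rank
`i(n-1) - i(i-1)/2 + (j - i - 1)` in this order. -/
def lexGraph (n e : ℕ) : SimpleGraph (Fin n) where
  Adj i j := i ≠ j ∧
    min i.val j.val * (n - 1) - min i.val j.val * (min i.val j.val - 1) / 2
      + (max i.val j.val - min i.val j.val - 1) < e
  symm := by
    constructor
    intro i j h
    refine ⟨h.1.symm, ?_⟩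
    rw [max_comm j.val i.val, min_comm j.val i.val]
    exact h.2
  loopless := by
    constructor
    intro i h
    exact h.1 rfl

open Finset
open scoped Classical
set_option linter.unusedSectionVars false
set_option maxHeartbeats 1000000

section General
variable {V : Type*} [Fintype V] [DecidableEq V]

noncomputable def mset (G : SimpleGraph V) (k : ℕ) : Finset (Finset (Sym2 V)) :=
  univ.filter (fun M => IsMatchingSet G M ∧ M.card = k)

lemma matchCountK_eq_card (G : SimpleGraph V) (k : ℕ) :
    matchCountK G k = (mset G k).card := by
  rw [matchCountK, Nat.card_eq_fintype_card, mset]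
  convert Fintype.card_subtype _

lemma sym2_card_filter_mem {e : Sym2 V} (h : ¬ e.IsDiag) :
    (univ.filter (· ∈ e)).card = 2 := by
  induction e using Sym2.ind with
  | _ a b =>
    rw [Sym2.mk_isDiag_iff] at h
    have he : univ.filter (· ∈ s(a, b)) = {a, b} := by
      ext v; simp [Sym2.mem_iff]
    rw [he, card_insert_of_notMem (by simp [h]), card_singleton]

lemma card_covered (G : SimpleGraph V) {M : Finset (Sym2 V)} (h : IsMatchingSet G M) :
    (univ.filter (fun v => ∃ e ∈ M, v ∈ e)).card = 2 * M.card := by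
  have hs : univ.filter (fun v => ∃ e ∈ M, v ∈ e) = M.biUnion (fun e => univ.filter (· ∈ e)) := by
    ext v; simp
  rw [hs, card_biUnion]
  · rw [Finset.sum_congr rfl (fun e he => sym2_card_filter_mem
      (SimpleGraph.not_isDiag_of_mem_edgeSet G (h.1 e he)))]
    simp [mul_comm]
  · intro e he f hf hef
    rw [Function.onFun, Finset.disjoint_left]
    intro v hv hv'
    exact h.2 e he f hf hef v (by simpa using hv) (by simpa using hv')

lemma card_uncovered (G : SimpleGraph V) {M : Finset (Sym2 V)} (h : IsMatchingSet G M) :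
    (univ.filter (fun v => ∀ e ∈ M, v ∉ e)).card = Fintype.card V - 2 * M.card := by
  have hs : univ.filter (fun v => ∀ e ∈ M, v ∉ e)
      = univ \ univ.filter (fun v => ∃ e ∈ M, v ∈ e) := by
    ext v; simp
  rw [hs, card_sdiff_of_subset (filter_subset _ _), card_univ, card_covered G h]

lemma matchCountK_of_big (G : SimpleGraph V) (k : ℕ) (hk : Fintype.card V < 2 * k) :
    matchCountK G k = 0 := by
  rw [matchCountK_eq_card, Finset.card_eq_zero]
  refine eq_empty_of_forall_notMem ?_
  intro M hM
  simp only [mset, mem_filter, mem_univ, true_and] at hM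
  have h1 := card_covered G hM.1
  have h2 : (univ.filter (fun v => ∃ e ∈ M, v ∈ e)).card ≤ Fintype.card V := by
    simpa using card_filter_le univ _
  omega

lemma matchCountK_zero (G : SimpleGraph V) : matchCountK G 0 = 1 := by
  rw [matchCountK_eq_card]
  have h : mset G 0 = {∅} := by
    ext M
    simp only [mset, mem_filter, mem_univ, true_and, Finset.card_eq_zero, mem_singleton]
    constructor
    · exact fun h => h.2
    · rintro rfl; exact ⟨⟨by simp, by simp⟩, rfl⟩
  rw [h, card_singleton]

lemma matching_subset {G : SimpleGraph V} {M M' : Finset (Sym2 V)}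
    (h : IsMatchingSet G M) (hsub : M' ⊆ M) : IsMatchingSet G M' :=
  ⟨fun e he => h.1 e (hsub he),
   fun e he f hf hef v hv => h.2 e (hsub he) f (hsub hf) hef v hv⟩

lemma exists_map_eq {α β : Type*} [DecidableEq α] [DecidableEq β] (f : α ↪ β)
    (M : Finset β) (h : ∀ b ∈ M, ∃ a, f a = b) : ∃ N : Finset α, N.map f = M := by
  classical
  induction M using Finset.induction_on with
  | empty => exact ⟨∅, rfl⟩
  | @insert b M hb ih =>
    obtain ⟨N, hN⟩ := ih (fun x hx => h x (mem_insert_of_mem hx))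
    obtain ⟨a, ha⟩ := h b (mem_insert_self _ _)
    exact ⟨insert a N, by rw [Finset.map_insert, ha, hN]⟩

end General

section Prepend

def threshOf' (d : Bool) (c : List Bool) : SimpleGraph (Fin (c.length + 1)) :=
  threshOf (d :: c)

variable (d : Bool) (c : List Bool)

lemma fin_min_succ {n : ℕ} (i j : Fin n) : min i.succ j.succ = (min i j).succ := by
  rcases le_total i j with h | h
  · rw [min_eq_left h, min_eq_left (Fin.succ_le_succ_iff.mpr h)]
  · rw [min_eq_right h, min_eq_right (Fin.succ_le_succ_iff.mpr h)]

lemma get_cons_succ' (m : Fin c.length) : (d :: c).get m.succ = c.get m := rfl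

lemma adj_succ (i j : Fin c.length) :
    (threshOf' d c).Adj i.succ j.succ ↔ (threshOf c).Adj i j := by
  simp only [threshOf', threshOf, fin_min_succ, get_cons_succ']
  constructor
  · rintro ⟨h1, h2⟩
    exact ⟨fun h => h1 (by rw [h]), h2⟩
  · rintro ⟨h1, h2⟩
    exact ⟨fun h => h1 (Fin.succ_injective _ h), h2⟩

lemma adj_zero (j : Fin c.length) :
    (threshOf' d c).Adj 0 j.succ ↔ d = true := by
  have hmin : min (0 : Fin (c.length + 1)) j.succ = 0 := min_eq_left (Fin.zero_le _)
  simp only [threshOf', threshOf, hmin]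
  constructor
  · rintro ⟨h1, h2⟩
    exact h2
  · intro h
    exact ⟨(Fin.succ_ne_zero j).symm, h⟩

def semb (n : ℕ) : Sym2 (Fin n) ↪ Sym2 (Fin (n + 1)) :=
  ⟨Sym2.map Fin.succ, Sym2.map.injective (Fin.succ_injective n)⟩

lemma zero_not_mem_semb (e : Sym2 (Fin c.length)) :
    (0 : Fin (c.length + 1)) ∉ semb c.length e := by
  induction e using Sym2.ind with
  | _ a b =>
    simp only [semb, Function.Embedding.coeFn_mk, Sym2.map_pair_eq, Sym2.mem_iff]
    rintro (h | h) <;> exact (Fin.succ_ne_zero _) h.symm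

lemma semb_edge (e : Sym2 (Fin c.length)) :
    semb c.length e ∈ (threshOf' d c).edgeSet ↔ e ∈ (threshOf c).edgeSet := by
  induction e using Sym2.ind with
  | _ a b =>
    simp only [semb, Function.Embedding.coeFn_mk, Sym2.map_pair_eq, SimpleGraph.mem_edgeSet]
    exact adj_succ d c a b

lemma mem_range_of_avoid (e : Sym2 (Fin (c.length + 1))) (h : (0 : Fin (c.length + 1)) ∉ e) :
    ∃ e', semb c.length e' = e := by
  induction e using Sym2.ind with
  | _ a b =>
    rw [Sym2.mem_iff] at h
    push_neg at h
    obtain ⟨a', rfl⟩ := Fin.eq_succ_of_ne_zero (Ne.symm h.1)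
    obtain ⟨b', rfl⟩ := Fin.eq_succ_of_ne_zero (Ne.symm h.2)
    exact ⟨s(a', b'), by simp [semb]⟩

lemma mem_semb_succ (v : Fin c.length) (e : Sym2 (Fin c.length)) (hv : v ∈ e) :
    v.succ ∈ semb c.length e := by
  induction e using Sym2.ind with
  | _ a b =>
    rw [Sym2.mem_iff] at hv
    rcases hv with rfl | rfl <;> simp [semb]

lemma isMatching_map {N : Finset (Sym2 (Fin c.length))}
    (h : IsMatchingSet (threshOf c) N) :
    IsMatchingSet (threshOf' d c) (N.map (semb c.length)) := by
  constructor
  · intro e he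
    rw [Finset.mem_map] at he
    obtain ⟨e', he', rfl⟩ := he
    exact (semb_edge d c e').mpr (h.1 e' he')
  · intro e he f hf hef v hv hv'
    rw [Finset.mem_map] at he hf
    obtain ⟨e', he', rfl⟩ := he
    obtain ⟨f', hf', rfl⟩ := hf
    simp only [semb, Function.Embedding.coeFn_mk, Sym2.mem_map] at hv hv'
    obtain ⟨w, hw, hwv⟩ := hv
    obtain ⟨w', hw', hwv'⟩ := hv'
    have hwe : w' = w := Fin.succ_injective _ (hwv'.trans hwv.symm)
    subst hwe
    exact h.2 e' he' f' hf' (fun hh => hef (by rw [hh])) w' hw hw'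

lemma isMatching_unmap {N : Finset (Sym2 (Fin c.length))}
    (h : IsMatchingSet (threshOf' d c) (N.map (semb c.length))) :
    IsMatchingSet (threshOf c) N := by
  constructor
  · intro e he
    exact (semb_edge d c e).mp (h.1 _ (Finset.mem_map_of_mem _ he))
  · intro e he f hf hef v hv hv'
    exact h.2 _ (Finset.mem_map_of_mem _ he) _ (Finset.mem_map_of_mem _ hf)
      (fun hh => hef ((semb c.length).injective hh)) v.succ
      (mem_semb_succ c v e hv) (mem_semb_succ c v f hv')

lemma card_avoid (k : ℕ) :
    ((mset (threshOf' d c) k).filter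
        (fun M => ∀ e ∈ M, (0 : Fin (c.length + 1)) ∉ e)).card
      = (mset (threshOf c) k).card := by
  symm
  refine Finset.card_bij (fun N _ => N.map (semb c.length)) ?_ ?_ ?_
  · intro N hN
    simp only [mset, mem_filter, mem_univ, true_and] at hN ⊢
    refine ⟨⟨isMatching_map d c hN.1, by rw [Finset.card_map]; exact hN.2⟩, ?_⟩
    intro e he
    rw [Finset.mem_map] at he
    obtain ⟨e', _, rfl⟩ := he
    exact zero_not_mem_semb c e'
  · intro N₁ h₁ N₂ h₂ h
    exact Finset.map_injective _ h
  · intro M hM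
    simp only [mset, mem_filter, mem_univ, true_and] at hM
    obtain ⟨⟨hmat, hcard⟩, h0⟩ := hM
    obtain ⟨N, hN⟩ := exists_map_eq (semb c.length) M
      (fun e he => mem_range_of_avoid c e (fun h0' => h0 e he h0'))
    refine ⟨N, ?_, hN⟩
    simp only [mset, mem_filter, mem_univ, true_and]
    rw [← hN] at hmat hcard
    exact ⟨isMatching_unmap d c hmat, by rwa [Finset.card_map] at hcard⟩

lemma zero_isolated (e : Sym2 (Fin (c.length + 1)))
    (hE : e ∈ (threshOf' false c).edgeSet) : (0 : Fin (c.length + 1)) ∉ e := by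
  induction e using Sym2.ind with
  | _ a b =>
    rw [SimpleGraph.mem_edgeSet] at hE
    rw [Sym2.mem_iff]
    rintro (rfl | rfl)
    · obtain ⟨b', rfl⟩ := Fin.eq_succ_of_ne_zero (Ne.symm hE.1)
      simpa using (adj_zero false c b').mp hE
    · obtain ⟨a', rfl⟩ := Fin.eq_succ_of_ne_zero hE.1
      simpa using (adj_zero false c a').mp hE.symm

lemma prepend_false (k : ℕ) :
    matchCountK (threshOf (false :: c)) k = matchCountK (threshOf c) k := by
  have hh : matchCountK (threshOf' false c) k = matchCountK (threshOf c) k := by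
    rw [matchCountK_eq_card, matchCountK_eq_card, ← card_avoid false c k]
    congr 1
    refine ((Finset.filter_eq_self).mpr ?_).symm
    intro M hM e he h0
    simp only [mset, mem_filter, mem_univ, true_and] at hM
    exact zero_isolated c e (hM.1.1 e he) h0
  exact hh

noncomputable def pairSet (k : ℕ) : Finset (Finset (Sym2 (Fin c.length)) × Fin c.length) :=
  ((mset (threshOf c) k) ×ˢ univ).filter (fun p => ∀ e ∈ p.1, p.2 ∉ e)

lemma card_pairSet (k : ℕ) :
    (pairSet c k).card = (mset (threshOf c) k).card * (c.length - 2 * k) := by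
  have h0 : (pairSet c k).card
      = ∑ N ∈ mset (threshOf c) k, ((pairSet c k).filter (fun p => p.1 = N)).card :=
    Finset.card_eq_sum_card_fiberwise
      (fun p hp => (Finset.mem_product.mp (mem_filter.mp hp).1).1)
  have hterm : ∀ N ∈ mset (threshOf c) k,
      ((pairSet c k).filter (fun p => p.1 = N)).card = c.length - 2 * k := by
    intro N hN
    have hN' : IsMatchingSet (threshOf c) N ∧ N.card = k := by
      simpa only [mset, mem_filter, mem_univ, true_and] using hN
    have hb : ((pairSet c k).filter (fun p => p.1 = N)).card
        = (univ.filter (fun v => ∀ e ∈ N, v ∉ e)).card := by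
      refine Finset.card_bij (fun p _ => p.2) ?_ ?_ ?_
      · intro p hp
        simp only [pairSet, mem_filter, Finset.mem_product, mem_univ, and_true] at hp
        simp only [mem_filter, mem_univ, true_and]
        intro e he
        exact hp.1.2 e (by rw [hp.2]; exact he)
      · intro p hp q hq hpq
        have h1 : p.1 = q.1 := by
          rw [(mem_filter.mp hp).2, (mem_filter.mp hq).2]
        exact Prod.ext h1 hpq
      · intro v hv
        simp only [mem_filter, mem_univ, true_and] at hv
        refine ⟨(N, v), ?_, rfl⟩
        simp only [pairSet, mem_filter, Finset.mem_product, mem_univ, and_true]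
        refine ⟨?_, fun e he => hv e he⟩
        exact hN
    rw [hb, card_uncovered (threshOf c) hN'.1, Fintype.card_fin, hN'.2]
  rw [h0, Finset.sum_congr rfl hterm, Finset.sum_const, smul_eq_mul]

lemma e0_not_mem_map (u : Fin c.length) (N : Finset (Sym2 (Fin c.length))) :
    s((0 : Fin (c.length + 1)), u.succ) ∉ N.map (semb c.length) := by
  intro hmem
  rw [Finset.mem_map] at hmem
  obtain ⟨e', _, he'⟩ := hmem
  exact zero_not_mem_semb c e' (he' ▸ Sym2.mem_mk_left _ _)

lemma card_meet (k : ℕ) :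
    ((mset (threshOf' true c) (k + 1)).filter
        (fun M => ¬ ∀ e ∈ M, (0 : Fin (c.length + 1)) ∉ e)).card = (pairSet c k).card := by
  symm
  refine Finset.card_bij
    (fun p _ => insert s((0 : Fin (c.length + 1)), p.2.succ) (p.1.map (semb c.length))) ?_ ?_ ?_
  · rintro ⟨N, u⟩ hp
    simp only [pairSet, mem_filter, Finset.mem_product, mem_univ, and_true] at hp
    obtain ⟨hNm, hunc⟩ := hp
    have hNm' : IsMatchingSet (threshOf c) N ∧ N.card = k := by
      simpa only [mset, mem_filter, mem_univ, true_and] using hNm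
    obtain ⟨hmat, hcard⟩ := hNm'
    have hmm := isMatching_map true c hmat
    simp only [mem_filter]
    refine ⟨?_, ?_⟩
    · simp only [mset, mem_filter, mem_univ, true_and]
      constructor
      · constructor
        · intro e he
          rcases Finset.mem_insert.mp he with rfl | hmem
          · exact ((threshOf' true c).mem_edgeSet).mpr ((adj_zero true c u).mpr rfl)
          · exact hmm.1 e hmem
        · intro e he f hf hef v hv hv'
          rcases Finset.mem_insert.mp he with rfl | hme
          · rcases Finset.mem_insert.mp hf with rfl | hmf
            · exact hef rfl
            · rw [Finset.mem_map] at hmf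
              obtain ⟨f', hf', hff⟩ := hmf
              rw [← hff] at hv'
              rcases Sym2.mem_iff.mp hv with h0 | hu
              · exact zero_not_mem_semb c f' (h0 ▸ hv')
              · rw [hu] at hv'
                simp only [semb, Function.Embedding.coeFn_mk, Sym2.mem_map] at hv'
                obtain ⟨w, hw, hws⟩ := hv'
                have hwu : w = u := Fin.succ_injective _ hws
                exact hunc f' hf' (hwu ▸ hw)
          · rcases Finset.mem_insert.mp hf with rfl | hmf
            · rw [Finset.mem_map] at hme
              obtain ⟨e', he', hee⟩ := hme
              rw [← hee] at hv
              rcases Sym2.mem_iff.mp hv' with h0 | hu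
              · exact zero_not_mem_semb c e' (h0 ▸ hv)
              · rw [hu] at hv
                simp only [semb, Function.Embedding.coeFn_mk, Sym2.mem_map] at hv
                obtain ⟨w, hw, hws⟩ := hv
                have hwu : w = u := Fin.succ_injective _ hws
                exact hunc e' he' (hwu ▸ hw)
            · exact hmm.2 e hme f hmf hef v hv hv'
      · rw [Finset.card_insert_of_notMem (e0_not_mem_map c u N), Finset.card_map, hcard]
    · intro hall
      exact hall _ (Finset.mem_insert_self _ _) (Sym2.mem_mk_left _ _)
  · rintro ⟨N, u⟩ hp ⟨N', u'⟩ hq h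
    simp only at h
    have hcn : s((0 : Fin (c.length + 1)), u.succ) ∈
        insert s((0 : Fin (c.length + 1)), u'.succ) (N'.map (semb c.length)) := by
      rw [← h]; exact Finset.mem_insert_self _ _
    rcases Finset.mem_insert.mp hcn with heq | hmem
    swap
    · exact absurd hmem (e0_not_mem_map c u N')
    have huu : u = u' := Fin.succ_injective _ (Sym2.congr_right.mp heq)
    subst huu
    have hmaps : N.map (semb c.length) = N'.map (semb c.length) := by
      have h1 := Finset.erase_insert (e0_not_mem_map c u N)
      have h2 := Finset.erase_insert (e0_not_mem_map c u N')
      rw [← h1, ← h2, h]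
    have hNN : N = N' := Finset.map_injective _ hmaps
    rw [hNN]
  · intro M hM
    simp only [mem_filter] at hM
    obtain ⟨hMm, hne⟩ := hM
    have hMm' : IsMatchingSet (threshOf' true c) M ∧ M.card = k + 1 := by
      simpa only [mset, mem_filter, mem_univ, true_and] using hMm
    obtain ⟨hmat, hcard⟩ := hMm'
    push_neg at hne
    obtain ⟨e0, he0, h0e0⟩ := hne
    have h0e0' : ∃ y, e0 = s((0 : Fin (c.length + 1)), y) := h0e0
    obtain ⟨y, hy⟩ := h0e0'
    have hdiag : ¬ e0.IsDiag := SimpleGraph.not_isDiag_of_mem_edgeSet _ (hmat.1 e0 he0)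
    have hy0 : y ≠ 0 := by
      rintro rfl
      exact hdiag (hy ▸ Sym2.mk_isDiag_iff.mpr rfl)
    obtain ⟨u, rfl⟩ := Fin.eq_succ_of_ne_zero hy0
    have havoid : ∀ f ∈ M.erase e0, (0 : Fin (c.length + 1)) ∉ f := by
      intro f hf h0f
      exact hmat.2 e0 he0 f (Finset.mem_of_mem_erase hf)
        (Finset.ne_of_mem_erase hf).symm _ h0e0 h0f
    obtain ⟨N, hN⟩ := exists_map_eq (semb c.length) (M.erase e0)
      (fun f hf => mem_range_of_avoid c f (havoid f hf))
    have hsub : IsMatchingSet (threshOf' true c) (M.erase e0) :=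
      matching_subset hmat (Finset.erase_subset _ _)
    rw [← hN] at hsub
    have hmatN : IsMatchingSet (threshOf c) N := isMatching_unmap true c hsub
    have hcardN : N.card = k := by
      have h3 := Finset.card_erase_of_mem he0
      rw [← hN, Finset.card_map] at h3
      omega
    have huncN : ∀ e ∈ N, u ∉ e := by
      intro e' he' hu
      have h1 : u.succ ∈ (semb c.length) e' := mem_semb_succ c u e' hu
      have h2 : (semb c.length) e' ∈ M.erase e0 := by
        rw [← hN]; exact Finset.mem_map_of_mem _ he'
      have hne' : e0 ≠ (semb c.length) e' := by
        intro hcon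
        exact zero_not_mem_semb c e' (hcon ▸ h0e0)
      exact hmat.2 e0 he0 _ (Finset.mem_of_mem_erase h2) hne' u.succ
        (hy ▸ Sym2.mem_mk_right _ _) h1
    refine ⟨(N, u), ?_, ?_⟩
    · simp only [pairSet, mem_filter, Finset.mem_product, mem_univ, and_true]
      refine ⟨?_, fun e he => huncN e he⟩
      simp only [mset, mem_filter, mem_univ, true_and]
      exact ⟨hmatN, hcardN⟩
    · simp only
      rw [hN, ← hy, Finset.insert_erase he0]

lemma prepend_true (k : ℕ) :
    matchCountK (threshOf (true :: c)) (k + 1)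
      = matchCountK (threshOf c) (k + 1)
        + (c.length - 2 * k) * matchCountK (threshOf c) k := by
  have hh : matchCountK (threshOf' true c) (k + 1)
      = matchCountK (threshOf c) (k + 1)
        + (c.length - 2 * k) * matchCountK (threshOf c) k := by
    rw [matchCountK_eq_card, matchCountK_eq_card, matchCountK_eq_card]
    have hsplit := Finset.card_filter_add_card_filter_not
      (s := mset (threshOf' true c) (k + 1))
      (p := fun M => ∀ e ∈ M, (0 : Fin (c.length + 1)) ∉ e)
    rw [← hsplit, card_avoid true c (k + 1), card_meet, card_pairSet, Nat.mul_comm]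
  exact hh

end Prepend

lemma base (ρ : List Bool) : ∀ k,
    matchCountK (threshOf (false :: true :: true :: false :: ρ)) k
      = matchCountK (threshOf (true :: false :: false :: true :: ρ)) k := by
  intro k
  have hzero : ∀ i, ρ.length < 2 * i → matchCountK (threshOf ρ) i = 0 := by
    intro i hi
    exact matchCountK_of_big _ i (by simpa using hi)
  rw [prepend_false]
  match k with
  | 0 => rw [matchCountK_zero, matchCountK_zero]
  | 1 =>
    rw [prepend_true (true :: false :: ρ) 0, prepend_true (false :: ρ) 0,
      prepend_true (false :: false :: true :: ρ) 0]
    simp only [prepend_false]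
    rw [prepend_true ρ 0]
    simp only [matchCountK_zero, List.length_cons, Nat.mul_zero, Nat.sub_zero, Nat.mul_one]
    omega
  | (j+2) =>
    rw [prepend_true (true :: false :: ρ) (j+1), prepend_true (false :: ρ) (j+1),
      prepend_true (false :: ρ) j,
      prepend_true (false :: false :: true :: ρ) (j+1)]
    simp only [prepend_false]
    rw [prepend_true ρ (j+1), prepend_true ρ j]
    simp only [List.length_cons]
    have h1 := hzero (j+1)
    generalize matchCountK (threshOf ρ) (j+2) = a2 at *
    generalize matchCountK (threshOf ρ) (j+1) = a1 at *
    generalize matchCountK (threshOf ρ) j = a0 at *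
    rcases le_or_gt (2 * j + 2) ρ.length with hc | hc
    · obtain ⟨s, hs⟩ : ∃ s, ρ.length = 2 * j + 2 + s := ⟨ρ.length - (2 * j + 2), by omega⟩
      rw [hs, show 2 * j + 2 + s + 1 - 2 * (j + 1) = s + 1 from by omega,
        show 2 * j + 2 + s + 1 + 1 - 2 * (j + 1) = s + 2 from by omega,
        show 2 * j + 2 + s + 1 - 2 * j = s + 3 from by omega,
        show 2 * j + 2 + s - 2 * (j + 1) = s from by omega,
        show 2 * j + 2 + s + 1 + 1 + 1 - 2 * (j + 1) = s + 3 from by omega,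
        show 2 * j + 2 + s - 2 * j = s + 2 from by omega]
      ring
    · rw [h1 (by omega)]
      rw [show ρ.length + 1 + 1 - 2 * (j + 1) = ρ.length - 2 * j from by omega,
        show ρ.length + 1 + 1 + 1 - 2 * (j + 1) = ρ.length + 1 - 2 * j from by omega]
      ring

section General2
variable {V : Type*} [Fintype V] [DecidableEq V]

lemma edgeCount_eq_matchCountK_one (G : SimpleGraph V) :
    edgeCount G = matchCountK G 1 := by
  rw [matchCountK_eq_card, edgeCount]
  have h1 : mset G 1 = (univ.filter (fun e => e ∈ G.edgeSet)).image
      (fun e => ({e} : Finset (Sym2 V))) := by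
    ext M
    simp only [mset, mem_filter, mem_univ, true_and, mem_image, Finset.card_eq_one]
    constructor
    · rintro ⟨hm, e, rfl⟩
      exact ⟨e, hm.1 e (by simp), rfl⟩
    · rintro ⟨e, he, rfl⟩
      exact ⟨⟨by simpa using he, by simp⟩, e, rfl⟩
  rw [h1, card_image_of_injective _ (fun a b h => by simpa using h)]
  rw [Nat.card_eq_fintype_card]
  convert Fintype.card_subtype _

lemma matchCount_eq_sum (G : SimpleGraph V) :
    matchCount G = ∑ k ∈ range (Fintype.card (Sym2 V) + 1), matchCountK G k := by
  have h0 : matchCount G = (univ.filter (fun M => IsMatchingSet G M)).card := by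
    rw [matchCount, Nat.card_eq_fintype_card]
    convert Fintype.card_subtype _
  rw [h0, Finset.card_eq_sum_card_fiberwise
    (f := Finset.card) (t := range (Fintype.card (Sym2 V) + 1))
    (fun M _ => mem_range.mpr (Nat.lt_succ_of_le (by simpa using card_le_univ M)))]
  refine Finset.sum_congr rfl (fun k _ => ?_)
  rw [matchCountK_eq_card, mset, filter_filter]

end General2

lemma lift (d : Bool) (X Y : List Bool) (hlen : X.length = Y.length)
    (h : ∀ k, matchCountK (threshOf X) k = matchCountK (threshOf Y) k) :
    ∀ k, matchCountK (threshOf (d :: X)) k = matchCountK (threshOf (d :: Y)) k := by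
  intro k
  cases d
  · rw [prepend_false, prepend_false]; exact h k
  · match k with
    | 0 => rw [matchCountK_zero, matchCountK_zero]
    | (k+1) => rw [prepend_true, prepend_true, h (k+1), h k, hlen]

lemma mainK (σ ρ : List Bool) : ∀ k,
    matchCountK (threshOf (σ ++ [false, true, true, false] ++ ρ)) k
      = matchCountK (threshOf (σ ++ [true, false, false, true] ++ ρ)) k := by
  induction σ with
  | nil => exact base ρ
  | cons d σ' ih =>
    exact lift d (σ' ++ [false, true, true, false] ++ ρ)
      (σ' ++ [true, false, false, true] ++ ρ) (by simp) ih

/-- For all binary strings `σ` and `ρ`, the threshold graphs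
`G = T(σ 0110 ρ)` and `G' = T(σ 1001 ρ)` have the same number of vertices and edges,
and `m(G) = m(G')` and `m_k(G) = m_k(G')` for every `k`. -/
theorem ab_switch_matchings (σ ρ : List Bool) :
    (σ ++ [false, true, true, false] ++ ρ).length =
        (σ ++ [true, false, false, true] ++ ρ).length ∧
      edgeCount (threshOf (σ ++ [false, true, true, false] ++ ρ)) =
        edgeCount (threshOf (σ ++ [true, false, false, true] ++ ρ)) ∧
      matchCount (threshOf (σ ++ [false, true, true, false] ++ ρ)) =
        matchCount (threshOf (σ ++ [true, false, false, true] ++ ρ)) ∧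
      ∀ k : ℕ, matchCountK (threshOf (σ ++ [false, true, true, false] ++ ρ)) k =
        matchCountK (threshOf (σ ++ [true, false, false, true] ++ ρ)) k := by
  have hlen : (σ ++ [false, true, true, false] ++ ρ).length
      = (σ ++ [true, false, false, true] ++ ρ).length := by simp
  have hK := mainK σ ρ
  refine ⟨hlen, ?_, ?_, hK⟩
  · rw [edgeCount_eq_matchCountK_one, edgeCount_eq_matchCountK_one, hK 1]
  · rw [matchCount_eq_sum, matchCount_eq_sum]
    have hcard : Fintype.card (Sym2 (Fin (σ ++ [false, true, true, false] ++ ρ).length))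
        = Fintype.card (Sym2 (Fin (σ ++ [true, false, false, true] ++ ρ).length)) := by
      rw [hlen]
    rw [hcard]
    exact Finset.sum_congr rfl (fun k _ => hK k)
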